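/- Let n ≥ 1 and let Φ be a formal power series in the variables y_1,…,y_n over ℂ (an element of MvPowerSeries (Fin n) ℂ). Suppose Φ satisfies the formal Euler equation Σ_{k=1}^{n} (k−1)·y_k·(∂Φ/∂y_k) − (n+1)·(∂Φ/∂y_1) = (n−3)·Φ, where ∂/∂y_k denotes the formal partial derivative of power series. Then for every multi-index m = (m_1,…,m_n) ∈ ℕ^n: (n+1)·(m_1+1)·coeff_{m+e_1}(Φ) = (3 − n + Σ_{k=2}^{n} (k−1)·m_k)·coeff_m(Φ), where e_1 is the multi-index (1,0,…,0). Equivalently, writing Φ = Σ_m σ(m_1,…,m_n)·y_1^{m_1}⋯y_n^{m_n}/(m_1!⋯m_n!), the coefficients satisfy σ(m_1+1, m_2,…,m_n) = ((3 − n + Σ_{k=2}^{n}(k−1)·m_k)/(n+1))·σ(m_1,…,m_n). -/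

import Mathlib

open Complex

/-- The formal partial derivative `∂Φ/∂y_k` of a multivariate formal power series. -/
noncomputable def mvPder {n : ℕ} (k : Fin n) (Φ : MvPowerSeries (Fin n) ℂ) :
    MvPowerSeries (Fin n) ℂ :=
  fun m => ((m k : ℂ) + 1) * MvPowerSeries.coeff (m + Finsupp.single k 1) Φ

lemma coeff_mvPder {n : ℕ} (k : Fin n) (Φ : MvPowerSeries (Fin n) ℂ) (m : Fin n →₀ ℕ) :
    MvPowerSeries.coeff m (mvPder k Φ)
      = ((m k : ℂ) + 1) * MvPowerSeries.coeff (m + Finsupp.single k 1) Φ := rfl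

lemma coeff_X_mul_mvPder {n : ℕ} (k : Fin n) (Φ : MvPowerSeries (Fin n) ℂ)
    (m : Fin n →₀ ℕ) :
    MvPowerSeries.coeff m (MvPowerSeries.X k * mvPder k Φ)
      = (m k : ℂ) * MvPowerSeries.coeff m Φ := by
  classical
  rw [MvPowerSeries.X, MvPowerSeries.coeff_monomial_mul]
  by_cases h : Finsupp.single k 1 ≤ m
  · rw [if_pos h, coeff_mvPder, one_mul]
    have hk : 1 ≤ m k := by simpa using h k
    have h1 : (m - Finsupp.single k 1 : Fin n →₀ ℕ) k = m k - 1 := by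
      rw [Finsupp.tsub_apply, Finsupp.single_apply, if_pos rfl]
    have h2 : m - Finsupp.single k 1 + Finsupp.single k 1 = m := by
      ext j
      rw [Finsupp.add_apply, Finsupp.tsub_apply, Finsupp.single_apply]
      by_cases hj : k = j
      · subst hj; simp [Nat.sub_add_cancel hk]
      · simp [hj]
    rw [h1, h2]
    congr 1
    push_cast [Nat.cast_sub hk]
    ring
  · rw [if_neg h]
    have hk : m k = 0 := by
      by_contra hc
      exact h fun j => by
        rcases eq_or_ne j k with rfl | hj
        · simpa [Finsupp.single_apply] using Nat.one_le_iff_ne_zero.mpr hc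
        · simp [Finsupp.single_apply, Ne.symm hj]
    simp [hk]

/-- Quasi-homogeneity of a formal power series with respect to the Euler vector field
`E = Σ_{k=1}^n (k−1)·y_k·∂/∂y_k − (n+1)·∂/∂y_1` with eigenvalue `n−3` forces the
recursion among its Taylor coefficients.  Here the index `i : Fin n` corresponds to the
variable `y_{i+1}`, so the weight of `y_{i+1}` is `i` and `∂/∂y_1` is `mvPder ⟨0,_⟩`. -/
theorem euler_equation_coeff_recursion (n : ℕ) (hn : 1 ≤ n)
    (Φ : MvPowerSeries (Fin n) ℂ)
    (hE : (∑ k : Fin n, (k : ℂ) • (MvPowerSeries.X k * mvPder k Φ))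
        - ((n : ℂ) + 1) • mvPder ⟨0, hn⟩ Φ = ((n : ℂ) - 3) • Φ) :
    ∀ m : Fin n →₀ ℕ,
      ((n : ℂ) + 1) * ((m ⟨0, hn⟩ : ℂ) + 1) *
          MvPowerSeries.coeff (m + Finsupp.single ⟨0, hn⟩ 1) Φ =
        (3 - (n : ℂ) + ∑ k : Fin n, (k : ℂ) * (m k : ℂ)) * MvPowerSeries.coeff m Φ := by
  intro m
  have h := congrArg (MvPowerSeries.coeff m) hE
  simp only [map_sub, map_sum, map_smul, coeff_X_mul_mvPder, coeff_mvPder, smul_eq_mul] at h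
  rw [show (∑ k : Fin n, (k : ℂ) * ((m k : ℂ) * MvPowerSeries.coeff m Φ))
      = (∑ k : Fin n, (k : ℂ) * (m k : ℂ)) * MvPowerSeries.coeff m Φ by
    rw [Finset.sum_mul]; exact Finset.sum_congr rfl fun k _ => (mul_assoc _ _ _).symm] at h
  linear_combination -h
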